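/- arXiv:1908.03252 — 2 statements merged into one kernel-verified Lean document; each statement's English description precedes it below -/
import Mathlib

section
/- Ryser's formula: for any n×n real matrix A with n ≥ 1, perm(A) = (-1)^n · Σ_{S ⊆ {1,...,n}} (-1)^{|S|} · Π_{i=1}^n (Σ_{j ∈ S} a_{ij}). -/
/-- The permanent of an `n × n` matrix. -/
def perm {n : ℕ} {R : Type*} [CommRing R] (A : Matrix (Fin n) (Fin n) R) : R :=
  ∑ σ : Equiv.Perm (Fin n), ∏ i, A i (σ i)

lemma sum_powerset_neg_one_pow_card_real {α : Type*} [DecidableEq α] (x : Finset α) :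
    (∑ m ∈ x.powerset, (-1 : ℝ) ^ m.card) = if x = ∅ then 1 else 0 := by
  have h := Finset.sum_powerset_neg_one_pow_card (x := x)
  calc ∑ m ∈ x.powerset, (-1 : ℝ) ^ m.card
      = ((∑ m ∈ x.powerset, (-1 : ℤ) ^ m.card : ℤ) : ℝ) := by push_cast; rfl
    _ = _ := by rw [h]; split <;> norm_num

lemma sum_superset_neg_one {n : ℕ} (T : Finset (Fin n)) :
    ∑ S : Finset (Fin n), (if T ⊆ S then (-1 : ℝ) ^ S.card else 0)
      = if T = Finset.univ then (-1 : ℝ) ^ n else 0 := by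
  rw [← Finset.sum_filter]
  have hbij : ∑ S ∈ Finset.univ.filter (fun S => T ⊆ S), (-1 : ℝ) ^ S.card
      = ∑ U ∈ Tᶜ.powerset, (-1 : ℝ) ^ (T ∪ U).card := by
    refine Finset.sum_nbij' (fun S => S \ T) (fun U => T ∪ U) ?_ ?_ ?_ ?_ ?_
    · intro S hS
      simp only [Finset.mem_powerset]
      intro x hx
      simp only [Finset.mem_sdiff] at hx
      simp [Finset.mem_compl, hx.2]
    · intro U hU
      simp
    · intro S hS
      simp only [Finset.mem_filter] at hS
      exact Finset.union_sdiff_of_subset hS.2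
    · intro U hU
      simp only [Finset.mem_powerset] at hU
      show (T ∪ U) \ T = U
      rw [Finset.union_sdiff_left]
      apply Finset.sdiff_eq_self_of_disjoint
      exact Finset.disjoint_left.mpr (fun x hx hx' => by
        have := hU hx; simp only [Finset.mem_compl] at this; exact this hx')
    · intro S hS
      simp only [Finset.mem_filter] at hS
      show (-1 : ℝ) ^ S.card = (-1 : ℝ) ^ (T ∪ S \ T).card
      rw [Finset.union_sdiff_of_subset hS.2]
  rw [hbij]
  have hcard : ∀ U ∈ Tᶜ.powerset, ((-1 : ℝ)) ^ (T ∪ U).card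
      = (-1 : ℝ) ^ T.card * (-1 : ℝ) ^ U.card := by
    intro U hU
    simp only [Finset.mem_powerset] at hU
    have hdisj : Disjoint T U := by
      refine Finset.disjoint_left.mpr (fun x hx hx' => ?_)
      have := hU hx'; simp only [Finset.mem_compl] at this; exact this hx
    rw [Finset.card_union_of_disjoint hdisj, pow_add]
  rw [Finset.sum_congr rfl hcard, ← Finset.mul_sum,
    sum_powerset_neg_one_pow_card_real]
  by_cases h : T = Finset.univ
  · rw [if_pos h, if_pos (by simp [h]), h, mul_one, Finset.card_univ, Fintype.card_fin]
  · rw [if_neg h, if_neg (fun hc => h (by simpa using (Finset.compl_eq_empty_iff _).mp hc))]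
    ring

/-- Ryser's formula. -/
theorem ryser_formula {n : ℕ} (hn : 1 ≤ n) (A : Matrix (Fin n) (Fin n) ℝ) :
    perm A =
      (-1 : ℝ) ^ n *
        ∑ S : Finset (Fin n), (-1 : ℝ) ^ S.card * ∏ i, ∑ j ∈ S, A i j := by
  have step1 : ∀ S : Finset (Fin n),
      (∏ i, ∑ j ∈ S, A i j)
        = ∑ g : Fin n → Fin n, (if ∀ i, g i ∈ S then ∏ i, A i (g i) else 0) := by
    intro S
    rw [Finset.prod_univ_sum (fun _ => S) (fun i j => A i j)]
    rw [← Finset.sum_filter]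
    apply Finset.sum_congr
    · ext g; simp [Fintype.mem_piFinset]
    · intros; rfl
  have hiff : ∀ (g : Fin n → Fin n) (S : Finset (Fin n)),
      (∀ i, g i ∈ S) ↔ Finset.image g Finset.univ ⊆ S := by
    intro g S
    constructor
    · intro h x hx
      simp only [Finset.mem_image, Finset.mem_univ, true_and] at hx
      obtain ⟨i, rfl⟩ := hx
      exact h i
    · intro h i
      exact h (Finset.mem_image_of_mem g (Finset.mem_univ i))
  calc perm A
      = ∑ g : Fin n → Fin n, (if Function.Surjective g then ∏ i, A i (g i) else 0) := by
        rw [← Finset.sum_filter, perm]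
        refine Finset.sum_nbij (fun σ : Equiv.Perm (Fin n) => ⇑σ) ?_ ?_ ?_ ?_
        · intro σ _
          simp only [Finset.mem_filter, Finset.mem_univ, true_and]
          exact σ.surjective
        · intro σ _ τ _ h
          exact Equiv.coe_fn_injective h
        · intro g hg
          simp only [Set.mem_image, Finset.mem_coe, Finset.mem_filter, Finset.mem_univ,
            true_and] at hg ⊢
          have hb : Function.Bijective g := Finite.surjective_iff_bijective.mp hg
          exact ⟨Equiv.ofBijective g hb, rfl⟩
        · intros; rfl
    _ = ∑ g : Fin n → Fin n, (∏ i, A i (g i)) *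
          (if Finset.image g Finset.univ = Finset.univ then (-1 : ℝ) ^ n else 0) *
          (-1 : ℝ) ^ n := by
        apply Finset.sum_congr rfl
        intro g _
        have hsurj : Function.Surjective g ↔ Finset.image g Finset.univ = Finset.univ := by
          constructor
          · intro h; ext x; simpa using h x
          · intro h x
            have hx : x ∈ Finset.image g Finset.univ := by rw [h]; exact Finset.mem_univ x
            simpa using hx
        by_cases h : Function.Surjective g
        · rw [if_pos h, if_pos (hsurj.mp h)]
          rw [mul_assoc, ← mul_pow]
          simp
        · rw [if_neg h, if_neg (fun hc => h (hsurj.mpr hc))]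
          ring
    _ = (∑ g : Fin n → Fin n, ∑ S : Finset (Fin n),
          (-1 : ℝ) ^ S.card * (if ∀ i, g i ∈ S then ∏ i, A i (g i) else 0)) *
          (-1 : ℝ) ^ n := by
        rw [Finset.sum_mul]
        apply Finset.sum_congr rfl
        intro g _
        congr 1
        have := sum_superset_neg_one (Finset.image g Finset.univ)
        calc (∏ i, A i (g i)) *
              (if Finset.image g Finset.univ = Finset.univ then (-1 : ℝ) ^ n else 0)
            = (∏ i, A i (g i)) *
              ∑ S : Finset (Fin n),
                (if Finset.image g Finset.univ ⊆ S then (-1 : ℝ) ^ S.card else 0) := by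
              rw [this]
          _ = ∑ S : Finset (Fin n),
                (-1 : ℝ) ^ S.card * (if ∀ i, g i ∈ S then ∏ i, A i (g i) else 0) := by
              rw [Finset.mul_sum]
              apply Finset.sum_congr rfl
              intro S _
              by_cases h : ∀ i, g i ∈ S
              · rw [if_pos ((hiff g S).mp h), if_pos h]; ring
              · rw [if_neg (fun hc => h ((hiff g S).mpr hc)), if_neg h]; ring
    _ = (-1 : ℝ) ^ n *
        ∑ S : Finset (Fin n), (-1 : ℝ) ^ S.card * ∏ i, ∑ j ∈ S, A i j := by
        rw [mul_comm]
        congr 1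
        rw [Finset.sum_comm]
        apply Finset.sum_congr rfl
        intro S _
        rw [step1 S, Finset.mul_sum]
end

section
/- With f_Ryser : 2^{[n]} → ℝ defined by f_Ryser(τ) = (-1)^{|τ|} · Π_{i=1}^n Σ_{j∈τ} a_{ij}, the permanent satisfies perm(A) = (-1)^n · Σ_{τ ⊆ [n]} f_Ryser(τ). -/
/-- `f_Ryser(τ) = (-1)^{|τ|} · Π_{i} Σ_{j∈τ} a_{ij}`. -/
def fRyser {n : ℕ} (A : Matrix (Fin n) (Fin n) ℝ) (τ : Finset (Fin n)) : ℝ :=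
  (-1 : ℝ) ^ τ.card * ∏ i, ∑ j ∈ τ, A i j

lemma neg_one_pow_sub {k m : ℕ} (h : k ≤ m) :
    ((-1 : ℝ)) ^ (m - k) = (-1) ^ m * (-1) ^ k := by
  have : ((-1 : ℝ)) ^ (m - k) * (-1) ^ k = (-1) ^ m := by
    rw [← pow_add, Nat.sub_add_cancel h]
  have hk : ((-1 : ℝ)) ^ k * (-1) ^ k = 1 := by
    rw [← pow_add, ← two_mul, pow_mul]; norm_num
  calc ((-1 : ℝ)) ^ (m - k) = (-1) ^ (m - k) * ((-1) ^ k * (-1) ^ k) := by rw [hk, mul_one]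
    _ = ((-1) ^ (m - k) * (-1) ^ k) * (-1) ^ k := by ring
    _ = (-1) ^ m * (-1) ^ k := by rw [this]

lemma sum_superset_neg_one_pow {n : ℕ} (S : Finset (Fin n)) :
    ∑ τ : Finset (Fin n), (if S ⊆ τ then ((-1 : ℝ)) ^ τ.card else 0)
      = if S = Finset.univ then (-1 : ℝ) ^ n else 0 := by
  have hb : Function.Bijective (fun τ : Finset (Fin n) => τᶜ) :=
    Function.Involutive.bijective (fun τ => compl_compl τ)
  rw [← Function.Bijective.sum_comp hb
    (fun τ => if S ⊆ τ then ((-1 : ℝ)) ^ τ.card else 0)]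
  simp only [Finset.card_compl, Fintype.card_fin]
  have key : ∀ τ : Finset (Fin n),
      (if S ⊆ τᶜ then ((-1 : ℝ)) ^ (n - τ.card) else 0)
        = (-1 : ℝ) ^ n * (if τ ⊆ Sᶜ then ((-1 : ℝ)) ^ τ.card else 0) := by
    intro τ
    by_cases h : S ⊆ τᶜ
    · rw [if_pos h, if_pos (by rwa [← Finset.subset_compl_comm])]
      exact neg_one_pow_sub (by simpa using Finset.card_le_univ τ)
    · rw [if_neg h, if_neg (by rwa [Finset.subset_compl_comm]), mul_zero]
  rw [Finset.sum_congr rfl (fun τ _ => key τ), ← Finset.mul_sum]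
  have : (∑ τ : Finset (Fin n), if τ ⊆ Sᶜ then ((-1 : ℝ)) ^ τ.card else 0)
      = ∑ τ ∈ Sᶜ.powerset, ((-1 : ℝ)) ^ τ.card := by
    rw [← Finset.sum_filter]
    congr 1
    ext τ
    simp [Finset.mem_powerset]
  rw [this, sum_powerset_neg_one_pow_card_real]
  by_cases hS : S = Finset.univ
  · simp [hS]
  · have : Sᶜ ≠ ∅ := by
      simpa [Finset.compl_eq_empty_iff] using hS
    simp [hS, this]

/-- The symbolic reformulation of Ryser's formula:
`perm A = (-1)^n · Σ_{τ ⊆ [n]} f_Ryser(τ)`. -/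
theorem perm_eq_sum_fRyser {n : ℕ} (A : Matrix (Fin n) (Fin n) ℝ) :
    perm A = (-1 : ℝ) ^ n * ∑ τ : Finset (Fin n), fRyser A τ := by
  classical
  symm
  -- expand each fRyser as a sum over functions
  have expand : ∀ τ : Finset (Fin n), fRyser A τ
      = ∑ g : Fin n → Fin n,
          (if ∀ i, g i ∈ τ then ((-1 : ℝ)) ^ τ.card * ∏ i, A i (g i) else 0) := by
    intro τ
    rw [fRyser, Finset.prod_univ_sum (t := fun _ => τ) (f := fun i j => A i j), Finset.mul_sum, ← Finset.sum_filter]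
    congr 1
    ext g
    simp [Fintype.mem_piFinset]
  calc (-1 : ℝ) ^ n * ∑ τ : Finset (Fin n), fRyser A τ
      = (-1 : ℝ) ^ n * ∑ τ : Finset (Fin n), ∑ g : Fin n → Fin n,
          (if ∀ i, g i ∈ τ then ((-1 : ℝ)) ^ τ.card * ∏ i, A i (g i) else 0) := by
        rw [Finset.sum_congr rfl (fun τ _ => expand τ)]
    _ = (-1 : ℝ) ^ n * ∑ g : Fin n → Fin n, (∏ i, A i (g i)) *
          ∑ τ : Finset (Fin n), (if Finset.image g Finset.univ ⊆ τ
            then ((-1 : ℝ)) ^ τ.card else 0) := by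
        rw [Finset.sum_comm]
        congr 1
        refine Finset.sum_congr rfl (fun g _ => ?_)
        rw [Finset.mul_sum]
        refine Finset.sum_congr rfl (fun τ _ => ?_)
        simp only [Finset.image_subset_iff, Finset.mem_univ, true_implies]
        split_ifs <;> ring
    _ = (-1 : ℝ) ^ n * ∑ g : Fin n → Fin n, (∏ i, A i (g i)) *
          (if Finset.image g Finset.univ = Finset.univ then (-1 : ℝ) ^ n else 0) := by
        congr 1
        exact Finset.sum_congr rfl (fun g _ => by rw [sum_superset_neg_one_pow])
    _ = ∑ g : Fin n → Fin n,
          (if Function.Bijective g then ∏ i, A i (g i) else 0) := by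
        rw [Finset.mul_sum]
        refine Finset.sum_congr rfl (fun g _ => ?_)
        have himg : (Finset.image g Finset.univ = Finset.univ) ↔ Function.Bijective g := by
          constructor
          · intro h
            have hsurj : Function.Surjective g := by
              intro y
              have hy : y ∈ Finset.image g Finset.univ := by
                rw [h]; exact Finset.mem_univ y
              simpa using hy
            exact (Finite.surjective_iff_bijective).mp hsurj
          · intro h
            apply Finset.eq_univ_of_forall
            intro y
            obtain ⟨x, hx⟩ := h.2 y
            exact Finset.mem_image.mpr ⟨x, Finset.mem_univ x, hx⟩
        rw [if_congr himg rfl rfl]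
        have h1 : ((-1 : ℝ)) ^ n * ((-1 : ℝ)) ^ n = 1 := by
          rw [← pow_add, ← two_mul, pow_mul]; norm_num
        split_ifs
        · calc (-1 : ℝ) ^ n * ((∏ i, A i (g i)) * (-1) ^ n)
              = ((-1 : ℝ) ^ n * (-1) ^ n) * ∏ i, A i (g i) := by ring
            _ = ∏ i, A i (g i) := by rw [h1, one_mul]
        · ring
    _ = perm A := by
        rw [perm, ← Finset.sum_filter]
        symm
        have : (Finset.univ.filter (fun g : Fin n → Fin n => Function.Bijective g))
            = Finset.image (fun σ : Equiv.Perm (Fin n) => ⇑σ) Finset.univ := by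
          ext g
          simp only [Finset.mem_filter, Finset.mem_univ, true_and, Finset.mem_image]
          constructor
          · intro h
            exact ⟨Equiv.ofBijective g h, rfl⟩
          · rintro ⟨σ, rfl⟩
            exact σ.bijective
        rw [this, Finset.sum_image (fun σ _ σ' _ h => Equiv.coe_fn_injective h)]
end
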